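/- Let G be a graph on n vertices with maximum degree Δ > 0. If k is a positive integer with k ≤ (n−2)/(22.4·Δ²), then every locally k-bounded edge colouring of the complete graph K_n contains a copy of G that is properly coloured, i.e., there is an injection σ: V(G) → V(K_n) such that any two edges of G sharing a vertex are mapped by σ to edges of K_n receiving different colours. -/

import Mathlib

open Finset Equiv

namespace BKP
attribute [local instance] Classical.propDecidable

variable {n : ℕ} {C : Type*}

abbrev Tri (n : ℕ) := ((Fin n × Fin n × Fin n) × (Fin n × Fin n × Fin n))

def slots (τ : Tri n) : Fin 6 → (Fin n ⊕ Fin n) :=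
  ![.inl τ.1.1, .inl τ.1.2.1, .inl τ.1.2.2, .inr τ.2.1, .inr τ.2.2.1, .inr τ.2.2.2]

def uses (τ : Tri n) (s : Fin n ⊕ Fin n) : Prop := ∃ i, slots τ i = s

lemma uses_iff (τ : Tri n) (s : Fin n ⊕ Fin n) :
    uses τ s ↔ (s = .inl τ.1.1 ∨ s = .inl τ.1.2.1 ∨ s = .inl τ.1.2.2 ∨
      s = .inr τ.2.1 ∨ s = .inr τ.2.2.1 ∨ s = .inr τ.2.2.2) := by
  constructor
  · rintro ⟨i, rfl⟩
    fin_cases i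
    exacts [Or.inl rfl, Or.inr (Or.inl rfl), Or.inr (Or.inr (Or.inl rfl)),
      Or.inr (Or.inr (Or.inr (Or.inl rfl))), Or.inr (Or.inr (Or.inr (Or.inr (Or.inl rfl)))),
      Or.inr (Or.inr (Or.inr (Or.inr (Or.inr rfl))))]
  · rintro (rfl|rfl|rfl|rfl|rfl|rfl)
    exacts [⟨0, rfl⟩, ⟨1, rfl⟩, ⟨2, rfl⟩, ⟨3, rfl⟩, ⟨4, rfl⟩, ⟨5, rfl⟩]

lemma not_uses_inl {τ : Tri n} {p : Fin n} (h : ¬ uses τ (.inl p)) :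
    p ≠ τ.1.1 ∧ p ≠ τ.1.2.1 ∧ p ≠ τ.1.2.2 := by
  rw [uses_iff] at h; push_neg at h
  refine ⟨?_, ?_, ?_⟩ <;> intro hh <;> subst hh <;> simp_all

lemma not_uses_inr {τ : Tri n} {p : Fin n} (h : ¬ uses τ (.inr p)) :
    p ≠ τ.2.1 ∧ p ≠ τ.2.2.1 ∧ p ≠ τ.2.2.2 := by
  rw [uses_iff] at h; push_neg at h
  refine ⟨?_, ?_, ?_⟩ <;> intro hh <;> subst hh <;> simp_all

def Valid (G : SimpleGraph (Fin n)) (χ : Sym2 (Fin n) → C) (τ : Tri n) : Prop :=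
  G.Adj τ.1.1 τ.1.2.1 ∧ G.Adj τ.1.1 τ.1.2.2 ∧ τ.1.2.1 < τ.1.2.2 ∧
  τ.2.1 ≠ τ.2.2.1 ∧ τ.2.1 ≠ τ.2.2.2 ∧ τ.2.2.1 ≠ τ.2.2.2 ∧
  χ s(τ.2.1, τ.2.2.1) = χ s(τ.2.1, τ.2.2.2)

def Occ (τ : Tri n) (σ : Equiv.Perm (Fin n)) : Prop :=
  σ τ.1.1 = τ.2.1 ∧ σ τ.1.2.1 = τ.2.2.1 ∧ σ τ.1.2.2 = τ.2.2.2

noncomputable def Av (T : Finset (Tri n)) : Finset (Equiv.Perm (Fin n)) :=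
  univ.filter (fun σ => ∀ τ ∈ T, ¬ Occ τ σ)

lemma mem_Av {T : Finset (Tri n)} {σ : Equiv.Perm (Fin n)} :
    σ ∈ Av T ↔ ∀ τ ∈ T, ¬ Occ τ σ := by simp [Av]

lemma Av_anti {T T' : Finset (Tri n)} (h : T ⊆ T') : Av T' ⊆ Av T := by
  intro σ hσ; rw [mem_Av] at *; exact fun τ hτ => hσ τ (h hτ)

lemma switching (τ : Tri n) (hxy : τ.1.1 ≠ τ.1.2.1) (hxz : τ.1.1 ≠ τ.1.2.2)
    (hyz : τ.1.2.1 ≠ τ.1.2.2)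
    (S : Finset (Tri n)) (hS : ∀ B ∈ S, ∀ s, uses τ s → ¬ uses B s) :
    n.descFactorial 3 * ((Av S).filter (fun σ => Occ τ σ)).card ≤ (Av S).card := by
  obtain ⟨⟨x, y, z⟩, ⟨a, b, c⟩⟩ := τ
  simp only at hxy hxz hyz
  -- the switching map
  set f : Equiv.Perm (Fin n) × (Fin 3 ↪ Fin n) → Equiv.Perm (Fin n) := fun p =>
    p.1 * Equiv.swap x (p.2 0) * Equiv.swap (Equiv.swap x (p.2 0) y) (p.2 1) *
      Equiv.swap (Equiv.swap (Equiv.swap x (p.2 0) y) (p.2 1) (Equiv.swap x (p.2 0) z)) (p.2 2)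
    with hf
  -- core pointwise facts
  have core : ∀ (σ : Equiv.Perm (Fin n)) (e : Fin 3 ↪ Fin n),
      (f (σ, e)) (e 0) = σ x ∧ (f (σ, e)) (e 1) = σ y ∧ (f (σ, e)) (e 2) = σ z ∧
      (∀ p, p ≠ x → p ≠ y → p ≠ z → p ≠ e 0 → p ≠ e 1 → p ≠ e 2 → (f (σ, e)) p = σ p) := by
    intro σ e
    set u := e 0; set v := e 1; set w := e 2
    have huv : u ≠ v := fun h => (Fin.ne_of_val_ne (by norm_num) : (0 : Fin 3) ≠ 1) (e.injective h)
    have huw : u ≠ w := fun h => (Fin.ne_of_val_ne (by norm_num) : (0 : Fin 3) ≠ 2) (e.injective h)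
    have hvw : v ≠ w := fun h => (Fin.ne_of_val_ne (by norm_num) : (1 : Fin 3) ≠ 2) (e.injective h)
    set s1 := Equiv.swap x u with hs1
    set s2 := Equiv.swap (s1 y) v with hs2
    set s3 := Equiv.swap (s2 (s1 z)) w with hs3
    have hfσ : f (σ, e) = σ * s1 * s2 * s3 := rfl
    have h1 : s1 y ≠ u := by
      intro h
      have : s1 (s1 y) = s1 u := by rw [h]
      rw [Equiv.swap_apply_self, Equiv.swap_apply_right] at this
      exact hxy this.symm
    have h2 : s2 u = u := Equiv.swap_apply_of_ne_of_ne (Ne.symm h1) huv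
    have hz1 : s1 z ≠ u := by
      intro h
      have : s1 (s1 z) = s1 u := by rw [h]
      rw [Equiv.swap_apply_self, Equiv.swap_apply_right] at this
      exact hxz this.symm
    have h3 : s2 (s1 z) ≠ u := by
      intro h
      have : s2 (s2 (s1 z)) = s2 u := by rw [h]
      rw [Equiv.swap_apply_self, h2] at this
      exact hz1 this
    have h4 : s2 (s1 z) ≠ v := by
      intro h
      have : s2 (s2 (s1 z)) = s2 v := by rw [h]
      rw [Equiv.swap_apply_self, Equiv.swap_apply_right] at this
      have : s1 (s1 z) = s1 (s1 y) := by rw [this]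
      rw [Equiv.swap_apply_self, Equiv.swap_apply_self] at this
      exact hyz this.symm
    have s3u : s3 u = u := Equiv.swap_apply_of_ne_of_ne (Ne.symm h3) huw
    have s3v : s3 v = v := Equiv.swap_apply_of_ne_of_ne (Ne.symm h4) hvw
    refine ⟨?_, ?_, ?_, ?_⟩
    · rw [hfσ]
      simp only [Equiv.Perm.mul_apply]
      rw [s3u, h2, Equiv.swap_apply_right]
    · rw [hfσ]
      simp only [Equiv.Perm.mul_apply]
      rw [s3v, Equiv.swap_apply_right, Equiv.swap_apply_self]
    · rw [hfσ]
      simp only [Equiv.Perm.mul_apply]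
      rw [Equiv.swap_apply_right, Equiv.swap_apply_self, Equiv.swap_apply_self]
    · intro p hpx hpy hpz hpu hpv hpw
      have hs1y : s1 y = y ∨ s1 y = x := by
        rcases eq_or_ne y u with h | h
        · right; rw [h, Equiv.swap_apply_right]
        · left; exact Equiv.swap_apply_of_ne_of_ne (Ne.symm hxy) h
      have hps1y : p ≠ s1 y := by rcases hs1y with h | h <;> rw [h] <;> assumption
      have s2p : s2 p = p := Equiv.swap_apply_of_ne_of_ne hps1y hpv
      have s1p : s1 p = p := Equiv.swap_apply_of_ne_of_ne hpx hpu
      have hps : p ≠ s2 (s1 z) := by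
        intro h
        have h' : s2 p = s1 z := by rw [h, Equiv.swap_apply_self]
        rw [s2p] at h'
        have h'' : s1 p = s1 (s1 z) := by rw [h']
        rw [s1p, Equiv.swap_apply_self] at h''
        exact hpz h''
      have s3p : s3 p = p := Equiv.swap_apply_of_ne_of_ne hps hpw
      rw [hfσ]
      simp only [Equiv.Perm.mul_apply]
      rw [s3p, s2p, s1p]
  -- maps into Av S
  have hmaps : ∀ p ∈ ((Av S).filter (fun σ => Occ ((x,y,z),(a,b,c)) σ)) ×ˢ
      (univ : Finset (Fin 3 ↪ Fin n)), f p ∈ Av S := by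
    rintro ⟨σ, e⟩ hp
    rw [Finset.mem_product, Finset.mem_filter] at hp
    obtain ⟨⟨hσAv, hOcc⟩, -⟩ := hp
    obtain ⟨ho1, ho2, ho3⟩ := hOcc
    obtain ⟨c1, c2, c3, cout⟩ := core σ e
    rw [ho1] at c1; rw [ho2] at c2; rw [ho3] at c3
    rw [mem_Av]
    intro B hB hOccB
    have hBx := not_uses_inl (hS B hB _ ⟨0, rfl⟩)
    have hBy := not_uses_inl (hS B hB _ ⟨1, rfl⟩)
    have hBz := not_uses_inl (hS B hB _ ⟨2, rfl⟩)
    have hBa := not_uses_inr (hS B hB _ ⟨3, rfl⟩)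
    have hBb := not_uses_inr (hS B hB _ ⟨4, rfl⟩)
    have hBc := not_uses_inr (hS B hB _ ⟨5, rfl⟩)
    have key : ∀ p q, (f (σ, e)) p = q → p ≠ x → p ≠ y → p ≠ z →
        q ≠ a → q ≠ b → q ≠ c → σ p = q := by
      intro p q hq hpx hpy hpz hqa hqb hqc
      rcases eq_or_ne p (e 0) with h | h0
      · exact absurd (by rw [← hq, h, c1]) (Ne.symm hqa)
      rcases eq_or_ne p (e 1) with h | h1
      · exact absurd (by rw [← hq, h, c2]) (Ne.symm hqb)
      rcases eq_or_ne p (e 2) with h | h2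
      · exact absurd (by rw [← hq, h, c3]) (Ne.symm hqc)
      · rw [← hq, cout p hpx hpy hpz h0 h1 h2]
    exact (mem_Av.1 hσAv B hB)
      ⟨key _ _ hOccB.1 (Ne.symm hBx.1) (Ne.symm hBy.1) (Ne.symm hBz.1)
        (Ne.symm hBa.1) (Ne.symm hBb.1) (Ne.symm hBc.1),
       key _ _ hOccB.2.1 (Ne.symm hBx.2.1) (Ne.symm hBy.2.1) (Ne.symm hBz.2.1)
        (Ne.symm hBa.2.1) (Ne.symm hBb.2.1) (Ne.symm hBc.2.1),
       key _ _ hOccB.2.2 (Ne.symm hBx.2.2) (Ne.symm hBy.2.2) (Ne.symm hBz.2.2)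
        (Ne.symm hBa.2.2) (Ne.symm hBb.2.2) (Ne.symm hBc.2.2)⟩
  -- injectivity
  have hinj : Set.InjOn f ↑(((Av S).filter (fun σ => Occ ((x,y,z),(a,b,c)) σ)) ×ˢ
      (univ : Finset (Fin 3 ↪ Fin n))) := by
    rintro ⟨σ, e⟩ hp ⟨σ', e'⟩ hp' heq
    simp only [Finset.coe_product, Set.mem_prod, Finset.mem_coe, Finset.mem_filter] at hp hp'
    obtain ⟨⟨-, ⟨ho1, ho2, ho3⟩⟩, -⟩ := hp
    obtain ⟨⟨-, ⟨ho1', ho2', ho3'⟩⟩, -⟩ := hp'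
    obtain ⟨c1, c2, c3, -⟩ := core σ e
    obtain ⟨c1', c2', c3', -⟩ := core σ' e'
    have hee : e = e' := by
      have g0 : (f (σ, e)) (e 0) = (f (σ', e')) (e' 0) := by
        rw [c1, c1', ho1, ho1']
      have g1 : (f (σ, e)) (e 1) = (f (σ', e')) (e' 1) := by
        rw [c2, c2', ho2, ho2']
      have g2 : (f (σ, e)) (e 2) = (f (σ', e')) (e' 2) := by
        rw [c3, c3', ho3, ho3']
      rw [heq] at g0 g1 g2
      have h0 := (f (σ', e')).injective g0
      have h1 := (f (σ', e')).injective g1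
      have h2 := (f (σ', e')).injective g2
      apply DFunLike.ext
      intro i
      fin_cases i
      · exact h0
      · exact h1
      · exact h2
    subst hee
    have : σ * (Equiv.swap x (e 0) * Equiv.swap (Equiv.swap x (e 0) y) (e 1) *
        Equiv.swap (Equiv.swap (Equiv.swap x (e 0) y) (e 1) (Equiv.swap x (e 0) z)) (e 2)) =
        σ' * (Equiv.swap x (e 0) * Equiv.swap (Equiv.swap x (e 0) y) (e 1) *
        Equiv.swap (Equiv.swap (Equiv.swap x (e 0) y) (e 1) (Equiv.swap x (e 0) z)) (e 2)) := by
      have := heq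
      simp only [hf] at this
      group at this ⊢
      exact this
    have := mul_right_cancel this
    rw [this]
  have ccard : Fintype.card (Fin 3 ↪ Fin n) = n.descFactorial 3 := by
    rw [Fintype.card_embedding_eq]; simp
  calc n.descFactorial 3 * ((Av S).filter (fun σ => Occ ((x,y,z),(a,b,c)) σ)).card
      = (((Av S).filter (fun σ => Occ ((x,y,z),(a,b,c)) σ)) ×ˢ
        (univ : Finset (Fin 3 ↪ Fin n))).card := by
        rw [Finset.card_product, card_univ, ccard, mul_comm]
    _ ≤ (Av S).card := Finset.card_le_card_of_injOn f hmaps hinj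


section Counting

variable {k Δ : ℕ} (G : SimpleGraph (Fin n)) [DecidableRel G.Adj] (χ : Sym2 (Fin n) → C)

noncomputable def BadVals : Finset (Fin n × Fin n × Fin n) :=
  univ.filter (fun t => t.1 ≠ t.2.1 ∧ t.1 ≠ t.2.2 ∧ t.2.1 ≠ t.2.2 ∧
    χ s(t.1, t.2.1) = χ s(t.1, t.2.2))

noncomputable def Cherries : Finset (Fin n × Fin n × Fin n) :=
  univ.filter (fun t => G.Adj t.1 t.2.1 ∧ G.Adj t.1 t.2.2 ∧ t.2.1 < t.2.2)

variable (hχk : ∀ (a : Fin n) (col : C),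
    (univ.filter (fun u => u ≠ a ∧ χ s(a, u) = col)).card ≤ k)

lemma nn_eq (m : ℕ) : m * m - m = m * (m - 1) := by
  cases m with
  | zero => simp
  | succ p => rw [Nat.succ_sub_one, Nat.mul_succ, Nat.add_sub_cancel]

include hχk in
lemma classCard (a b : Fin n) (hba : b ≠ a) (col : C) (hcol : χ s(a, b) = col) :
    (univ.filter (fun c' => c' ≠ a ∧ c' ≠ b ∧ χ s(a, c') = col)).card ≤ k - 1 := by
  have hsub : (univ.filter (fun c' => c' ≠ a ∧ c' ≠ b ∧ χ s(a, c') = col)) ⊆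
      (univ.filter (fun u => u ≠ a ∧ χ s(a, u) = col)).erase b := by
    intro c' hc'
    simp only [Finset.mem_filter, Finset.mem_erase, Finset.mem_univ, true_and] at *
    exact ⟨hc'.2.1, hc'.1, hc'.2.2⟩
  have hb : b ∈ (univ.filter (fun u => u ≠ a ∧ χ s(a, u) = col)) := by
    simp only [Finset.mem_filter, Finset.mem_univ, true_and]; exact ⟨hba, hcol⟩
  calc (univ.filter (fun c' => c' ≠ a ∧ c' ≠ b ∧ χ s(a, c') = col)).card
      ≤ ((univ.filter (fun u => u ≠ a ∧ χ s(a, u) = col)).erase b).card :=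
        Finset.card_le_card hsub
    _ = (univ.filter (fun u => u ≠ a ∧ χ s(a, u) = col)).card - 1 :=
        Finset.card_erase_of_mem hb
    _ ≤ k - 1 := Nat.sub_le_sub_right (hχk a col) 1

include hχk in
lemma badVals_card : (BadVals (C := C) χ).card ≤ n * (n - 1) * (k - 1) := by
  classical
  have H : ∀ t ∈ BadVals (C := C) χ, (t.1, t.2.1) ∈ (univ : Finset (Fin n)).offDiag := by
    intro t ht
    simp only [BadVals, Finset.mem_filter, Finset.mem_univ, true_and] at ht
    simp [Finset.mem_offDiag, ht.1]
  rw [Finset.card_eq_sum_card_fiberwise H]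
  have fib : ∀ p ∈ (univ : Finset (Fin n)).offDiag,
      ((BadVals (C := C) χ).filter (fun t => (t.1, t.2.1) = p)).card ≤ k - 1 := by
    rintro ⟨a, b⟩ hp
    simp only [Finset.mem_offDiag, Finset.mem_univ, true_and] at hp
    refine le_trans (Finset.card_le_card_of_injOn (fun t => t.2.2) ?_ ?_)
      (classCard χ hχk a b (Ne.symm hp) (χ s(a, b)) rfl)
    · intro t ht
      simp only [Finset.mem_coe, BadVals, Finset.mem_filter, Finset.mem_univ, true_and, Prod.mk.injEq] at ht ⊢
      obtain ⟨⟨h1, h2, h3, h4⟩, h5, h6⟩ := ht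
      subst h5; subst h6
      exact ⟨Ne.symm h2, Ne.symm h3, h4.symm⟩
    · rintro ⟨a1, b1, c1⟩ h1 ⟨a2, b2, c2⟩ h2 hq
      simp only [Finset.coe_filter, Set.mem_setOf_eq, Prod.mk.injEq] at h1 h2
      simp only at hq
      obtain ⟨-, h1a, h1b⟩ := h1; obtain ⟨-, h2a, h2b⟩ := h2
      simp [Prod.ext_iff, *]
  calc ∑ p ∈ (univ : Finset (Fin n)).offDiag,
        ((BadVals (C := C) χ).filter (fun t => (t.1, t.2.1) = p)).card
      ≤ (univ : Finset (Fin n)).offDiag.card * (k - 1) := by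
        rw [← smul_eq_mul]
        exact Finset.sum_le_card_nsmul _ _ _ fib
    _ ≤ n * (n - 1) * (k - 1) := by
        apply Nat.mul_le_mul_right
        rw [Finset.offDiag_card, card_univ, Fintype.card_fin, nn_eq]

include hχk in
lemma badValsFix_card (α : Fin n) :
    ((BadVals (C := C) χ).filter (fun t => t.1 = α ∨ t.2.1 = α ∨ t.2.2 = α)).card ≤
      3 * ((n - 1) * (k - 1)) := by
  classical
  have memBV : ∀ t, t ∈ BadVals (C := C) χ ↔ (t.1 ≠ t.2.1 ∧ t.1 ≠ t.2.2 ∧ t.2.1 ≠ t.2.2 ∧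
      χ s(t.1, t.2.1) = χ s(t.1, t.2.2)) := by
    intro t; simp [BadVals]
  have hcover : ((BadVals (C := C) χ).filter (fun t => t.1 = α ∨ t.2.1 = α ∨ t.2.2 = α)) ⊆
      ((BadVals (C := C) χ).filter (fun t => t.1 = α)) ∪
      ((BadVals (C := C) χ).filter (fun t => t.2.1 = α)) ∪
      ((BadVals (C := C) χ).filter (fun t => t.2.2 = α)) := by
    intro t ht
    simp only [Finset.mem_filter, Finset.mem_union] at *
    tauto
  have part : ∀ (W : Finset (Fin n × Fin n × Fin n))
      (sel : Fin n × Fin n × Fin n → Fin n),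
      (∀ t ∈ W, sel t ∈ (univ : Finset (Fin n)).erase α) →
      (∀ u ∈ (univ : Finset (Fin n)).erase α,
        (W.filter (fun t => sel t = u)).card ≤ k - 1) →
      W.card ≤ (n - 1) * (k - 1) := by
    intro W sel hmem hfib
    rw [Finset.card_eq_sum_card_fiberwise hmem]
    calc ∑ u ∈ (univ : Finset (Fin n)).erase α,
          (W.filter (fun t => sel t = u)).card
        ≤ ((univ : Finset (Fin n)).erase α).card * (k - 1) := by
          rw [← smul_eq_mul]; exact Finset.sum_le_card_nsmul _ _ _ hfib
      _ ≤ (n - 1) * (k - 1) := by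
          apply Nat.mul_le_mul_right
          rw [Finset.card_erase_of_mem (Finset.mem_univ α), card_univ, Fintype.card_fin]
  have h1 : ((BadVals (C := C) χ).filter (fun t => t.1 = α)).card ≤ (n - 1) * (k - 1) := by
    apply part _ (fun t => t.2.1)
    · intro t ht
      rw [Finset.mem_filter] at ht
      obtain ⟨htBV, hta⟩ := ht
      rw [memBV] at htBV
      rw [Finset.mem_erase]
      exact ⟨hta ▸ (Ne.symm htBV.1), Finset.mem_univ _⟩
    · intro u hu
      rw [Finset.mem_erase] at hu
      refine le_trans (Finset.card_le_card_of_injOn (fun t => t.2.2) ?_ ?_)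
        (classCard χ hχk α u (hu.1) (χ s(α, u)) rfl)
      · intro t ht
        simp only [Finset.mem_coe, Finset.mem_filter] at ht
        obtain ⟨⟨htBV, hta⟩, htu⟩ := ht
        rw [memBV] at htBV
        rw [Finset.mem_coe, Finset.mem_filter]
        refine ⟨Finset.mem_univ _, ?_, ?_, ?_⟩
        · rw [← hta]; exact Ne.symm htBV.2.1
        · rw [← htu]; exact Ne.symm htBV.2.2.1
        · rw [← hta, ← htu]; exact htBV.2.2.2.symm
      · rintro t1 h1' t2 h2' hq
        simp only [Finset.coe_filter, Set.mem_setOf_eq, Finset.mem_filter] at h1' h2'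
        have e1 : t1.1 = α := h1'.1.2
        have e2 : t2.1 = α := h2'.1.2
        have e3 : t1.2.1 = u := h1'.2
        have e4 : t2.2.1 = u := h2'.2
        have : t1.2.2 = t2.2.2 := hq
        refine Prod.ext (by rw [e1, e2]) (Prod.ext (by rw [e3, e4]) this)
  have h2 : ((BadVals (C := C) χ).filter (fun t => t.2.1 = α)).card ≤ (n - 1) * (k - 1) := by
    apply part _ (fun t => t.1)
    · intro t ht
      rw [Finset.mem_filter] at ht
      obtain ⟨htBV, hta⟩ := ht
      rw [memBV] at htBV
      rw [Finset.mem_erase]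
      exact ⟨hta ▸ htBV.1, Finset.mem_univ _⟩
    · intro u hu
      rw [Finset.mem_erase] at hu
      refine le_trans (Finset.card_le_card_of_injOn (fun t => t.2.2) ?_ ?_)
        (classCard χ hχk u α (Ne.symm hu.1) (χ s(u, α)) rfl)
      · intro t ht
        simp only [Finset.mem_coe, Finset.mem_filter] at ht
        obtain ⟨⟨htBV, hta⟩, htu⟩ := ht
        rw [memBV] at htBV
        rw [Finset.mem_coe, Finset.mem_filter]
        refine ⟨Finset.mem_univ _, ?_, ?_, ?_⟩
        · rw [← htu]; exact Ne.symm htBV.2.1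
        · rw [← hta]; exact Ne.symm htBV.2.2.1
        · rw [← hta, ← htu]; exact htBV.2.2.2.symm
      · rintro t1 h1' t2 h2' hq
        simp only [Finset.coe_filter, Set.mem_setOf_eq, Finset.mem_filter] at h1' h2'
        have e1 : t1.2.1 = α := h1'.1.2
        have e2 : t2.2.1 = α := h2'.1.2
        have e3 : t1.1 = u := h1'.2
        have e4 : t2.1 = u := h2'.2
        have : t1.2.2 = t2.2.2 := hq
        refine Prod.ext (by rw [e3, e4]) (Prod.ext (by rw [e1, e2]) this)
  have h3 : ((BadVals (C := C) χ).filter (fun t => t.2.2 = α)).card ≤ (n - 1) * (k - 1) := by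
    apply part _ (fun t => t.1)
    · intro t ht
      rw [Finset.mem_filter] at ht
      obtain ⟨htBV, hta⟩ := ht
      rw [memBV] at htBV
      rw [Finset.mem_erase]
      exact ⟨hta ▸ htBV.2.1, Finset.mem_univ _⟩
    · intro u hu
      rw [Finset.mem_erase] at hu
      refine le_trans (Finset.card_le_card_of_injOn (fun t => t.2.1) ?_ ?_)
        (classCard χ hχk u α (Ne.symm hu.1) (χ s(u, α)) rfl)
      · intro t ht
        simp only [Finset.mem_coe, Finset.mem_filter] at ht
        obtain ⟨⟨htBV, hta⟩, htu⟩ := ht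
        rw [memBV] at htBV
        rw [Finset.mem_coe, Finset.mem_filter]
        refine ⟨Finset.mem_univ _, ?_, ?_, ?_⟩
        · rw [← htu]; exact Ne.symm htBV.1
        · rw [← hta]; exact htBV.2.2.1
        · rw [← htu, ← hta]; exact htBV.2.2.2
      · rintro t1 h1' t2 h2' hq
        simp only [Finset.coe_filter, Set.mem_setOf_eq, Finset.mem_filter] at h1' h2'
        have e1 : t1.2.2 = α := h1'.1.2
        have e2 : t2.2.2 = α := h2'.1.2
        have e3 : t1.1 = u := h1'.2
        have e4 : t2.1 = u := h2'.2
        have : t1.2.1 = t2.2.1 := hq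
        refine Prod.ext (by rw [e3, e4]) (Prod.ext this (by rw [e1, e2]))
  calc ((BadVals (C := C) χ).filter (fun t => t.1 = α ∨ t.2.1 = α ∨ t.2.2 = α)).card
      ≤ (((BadVals (C := C) χ).filter (fun t => t.1 = α)) ∪
        ((BadVals (C := C) χ).filter (fun t => t.2.1 = α)) ∪
        ((BadVals (C := C) χ).filter (fun t => t.2.2 = α))).card := Finset.card_le_card hcover
    _ ≤ (((BadVals (C := C) χ).filter (fun t => t.1 = α)) ∪
        ((BadVals (C := C) χ).filter (fun t => t.2.1 = α))).card +
        ((BadVals (C := C) χ).filter (fun t => t.2.2 = α)).card := Finset.card_union_le _ _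
    _ ≤ ((BadVals (C := C) χ).filter (fun t => t.1 = α)).card +
        ((BadVals (C := C) χ).filter (fun t => t.2.1 = α)).card +
        ((BadVals (C := C) χ).filter (fun t => t.2.2 = α)).card :=
          Nat.add_le_add_right (Finset.card_union_le _ _) _
    _ ≤ 3 * ((n - 1) * (k - 1)) := by omega

variable (hdeg : ∀ v, G.degree v ≤ Δ)

lemma memCh : ∀ t, t ∈ Cherries G ↔ (G.Adj t.1 t.2.1 ∧ G.Adj t.1 t.2.2 ∧ t.2.1 < t.2.2) := by
  intro t; simp [Cherries]

include hdeg in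
lemma center_card (v : Fin n) :
    2 * ((Cherries G).filter (fun t => t.1 = v)).card ≤ Δ * (Δ - 1) := by
  classical
  have hmaps : ∀ p ∈ ((Cherries G).filter (fun t => t.1 = v)) ×ˢ (univ : Finset (Fin 2)),
      (if p.2 = 0 then (p.1.2.1, p.1.2.2) else (p.1.2.2, p.1.2.1)) ∈
        (G.neighborFinset v).offDiag := by
    rintro ⟨t, i⟩ hp
    rw [Finset.mem_product, Finset.mem_filter] at hp
    obtain ⟨⟨htc, htv⟩, -⟩ := hp
    rw [memCh] at htc
    obtain ⟨h1, h2, h3⟩ := htc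
    subst htv
    rw [Finset.mem_offDiag]
    by_cases hi : i = 0 <;> simp only [hi, if_true, if_false, reduceIte] <;>
      simp [SimpleGraph.mem_neighborFinset, h1, h2, h3.ne, h3.ne']
  have hinj : Set.InjOn (fun p : (Fin n × Fin n × Fin n) × Fin 2 =>
      (if p.2 = 0 then (p.1.2.1, p.1.2.2) else (p.1.2.2, p.1.2.1)))
      ↑(((Cherries G).filter (fun t => t.1 = v)) ×ˢ (univ : Finset (Fin 2))) := by
    rintro ⟨t1, i1⟩ h1 ⟨t2, i2⟩ h2 heq
    simp only [Finset.coe_product, Set.mem_prod, Finset.mem_coe, Finset.mem_filter] at h1 h2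
    obtain ⟨⟨ht1, hv1⟩, -⟩ := h1
    obtain ⟨⟨ht2, hv2⟩, -⟩ := h2
    rw [memCh] at ht1 ht2
    have hteq : t1 = t2 → i1 = i2 → ((t1, i1) : (Fin n × Fin n × Fin n) × Fin 2) = (t2, i2) := by
      intro a b; rw [a, b]
    fin_cases i1 <;> fin_cases i2 <;>
      simp only [Fin.mk_zero, Fin.mk_one, reduceIte, Fin.isValue,
        (by norm_num : ¬((1 : Fin 2) = 0)), if_neg, Prod.mk.injEq] at heq
    · exact hteq (Prod.ext (hv1.trans hv2.symm) (Prod.ext heq.1 heq.2)) rfl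
    · exfalso
      have l1 := ht1.2.2
      rw [heq.1, heq.2] at l1
      exact absurd (ht2.2.2.trans l1) (lt_irrefl _)
    · exfalso
      have l1 := ht2.2.2
      rw [← heq.1, ← heq.2] at l1
      exact absurd (ht1.2.2.trans l1) (lt_irrefl _)
    · exact hteq (Prod.ext (hv1.trans hv2.symm) (Prod.ext heq.2 heq.1)) rfl
  have hcard := Finset.card_le_card_of_injOn _ hmaps hinj
  rw [Finset.card_product, Finset.card_univ, Fintype.card_fin, Finset.offDiag_card] at hcard
  rw [mul_comm] at hcard
  refine le_trans hcard ?_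
  rw [SimpleGraph.card_neighborFinset_eq_degree, nn_eq]
  exact Nat.mul_le_mul (hdeg v) (Nat.sub_le_sub_right (hdeg v) 1)

include hdeg in
lemma leaf_card (v : Fin n) :
    ((Cherries G).filter (fun t => t.2.1 = v ∨ t.2.2 = v)).card ≤ Δ * (Δ - 1) := by
  classical
  set Pairs : Finset (Fin n × Fin n) :=
    univ.filter (fun p => G.Adj v p.1 ∧ G.Adj p.1 p.2 ∧ p.2 ≠ v) with hPairs
  have hmaps : ∀ t ∈ (Cherries G).filter (fun t => t.2.1 = v ∨ t.2.2 = v),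
      (t.1, if t.2.1 = v then t.2.2 else t.2.1) ∈ Pairs := by
    intro t ht
    rw [Finset.mem_filter] at ht
    obtain ⟨htc, hor⟩ := ht
    rw [memCh] at htc
    obtain ⟨h1, h2, h3⟩ := htc
    rw [hPairs, Finset.mem_filter]
    refine ⟨Finset.mem_univ _, ?_⟩
    by_cases hv : t.2.1 = v
    · simp only [hv, reduceIte]
      exact ⟨(hv ▸ h1).symm, h2, fun hh => h3.ne' (hh.trans hv.symm)⟩
    · have hv2 : t.2.2 = v := by tauto
      simp only [hv, reduceIte]
      exact ⟨(hv2 ▸ h2).symm, h1, fun hh => hv (hh)⟩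
  have hinj : Set.InjOn (fun t : Fin n × Fin n × Fin n =>
      (t.1, if t.2.1 = v then t.2.2 else t.2.1))
      ↑((Cherries G).filter (fun t => t.2.1 = v ∨ t.2.2 = v)) := by
    intro t1 h1 t2 h2 heq
    simp only [Finset.mem_coe, Finset.mem_filter] at h1 h2
    obtain ⟨ht1, hor1⟩ := h1
    obtain ⟨ht2, hor2⟩ := h2
    rw [memCh] at ht1 ht2
    simp only [Prod.mk.injEq] at heq
    obtain ⟨hfst, hsnd⟩ := heq
    by_cases e1 : t1.2.1 = v <;> by_cases e2 : t2.2.1 = v <;>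
      simp only [e1, e2, reduceIte] at hsnd
    · exact Prod.ext hfst (Prod.ext (e1.trans e2.symm) hsnd)
    · -- t1.2.1 = v, t2.2.2 = v, t1.2.2 = t2.2.1
      have hv2 : t2.2.2 = v := by tauto
      exfalso
      have l1 : v < t1.2.2 := e1 ▸ ht1.2.2
      have l2 : t2.2.1 < v := hv2 ▸ ht2.2.2
      rw [← hsnd] at l2
      exact absurd (l1.trans l2) (lt_irrefl _)
    · have hv1 : t1.2.2 = v := by tauto
      exfalso
      have l1 : v < t2.2.2 := e2 ▸ ht2.2.2
      have l2 : t1.2.1 < v := hv1 ▸ ht1.2.2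
      rw [hsnd] at l2
      exact absurd (l1.trans l2) (lt_irrefl _)
    · have hv1 : t1.2.2 = v := by tauto
      have hv2 : t2.2.2 = v := by tauto
      exact Prod.ext hfst (Prod.ext hsnd (hv1.trans hv2.symm))
  have hPc : Pairs.card ≤ Δ * (Δ - 1) := by
    have hm2 : ∀ p ∈ Pairs, p.1 ∈ G.neighborFinset v := by
      intro p hp
      rw [hPairs, Finset.mem_filter] at hp
      rw [SimpleGraph.mem_neighborFinset]
      exact hp.2.1
    rw [Finset.card_eq_sum_card_fiberwise hm2]
    have hfib : ∀ u ∈ G.neighborFinset v, (Pairs.filter (fun p => p.1 = u)).card ≤ Δ - 1 := by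
      intro u hu
      rw [SimpleGraph.mem_neighborFinset] at hu
      have : Pairs.filter (fun p => p.1 = u) ⊆
          ((G.neighborFinset u).erase v).image (fun q => (u, q)) := by
        intro p hp
        simp only [hPairs, Finset.mem_filter, Finset.mem_univ, true_and] at hp
        obtain ⟨⟨-, hadj, hne⟩, hpu⟩ := hp
        rw [Finset.mem_image]
        refine ⟨p.2, ?_, ?_⟩
        · rw [Finset.mem_erase, SimpleGraph.mem_neighborFinset]
          exact ⟨hne, hpu ▸ hadj⟩
        · rw [← hpu]
      refine le_trans (Finset.card_le_card this) ?_
      refine le_trans (Finset.card_image_le) ?_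
      rw [Finset.card_erase_of_mem (by rw [SimpleGraph.mem_neighborFinset]; exact hu.symm)]
      rw [SimpleGraph.card_neighborFinset_eq_degree]
      exact Nat.sub_le_sub_right (hdeg u) 1
    calc ∑ u ∈ G.neighborFinset v, (Pairs.filter (fun p => p.1 = u)).card
        ≤ (G.neighborFinset v).card * (Δ - 1) := by
          rw [← smul_eq_mul]; exact Finset.sum_le_card_nsmul _ _ _ hfib
      _ ≤ Δ * (Δ - 1) := by
          apply Nat.mul_le_mul_right
          rw [SimpleGraph.card_neighborFinset_eq_degree]; exact hdeg v
  exact le_trans (Finset.card_le_card_of_injOn _ hmaps hinj) hPc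

include hdeg in
lemma cherries_v_card (v : Fin n) :
    2 * ((Cherries G).filter (fun t => t.1 = v ∨ t.2.1 = v ∨ t.2.2 = v)).card ≤
      3 * (Δ * (Δ - 1)) := by
  classical
  have hsub : (Cherries G).filter (fun t => t.1 = v ∨ t.2.1 = v ∨ t.2.2 = v) ⊆
      ((Cherries G).filter (fun t => t.1 = v)) ∪
      ((Cherries G).filter (fun t => t.2.1 = v ∨ t.2.2 = v)) := by
    intro t ht
    simp only [Finset.mem_filter, Finset.mem_union] at *
    tauto
  have h := Finset.card_le_card hsub
  have h2 := le_trans h (Finset.card_union_le _ _)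
  have hc := center_card (Δ := Δ) G hdeg v
  have hl := leaf_card (Δ := Δ) G hdeg v
  omega

include hdeg in
lemma cherries_all_card : 2 * (Cherries G).card ≤ n * (Δ * (Δ - 1)) := by
  classical
  have hm : ∀ t ∈ Cherries G, t.1 ∈ (univ : Finset (Fin n)) := fun t _ => Finset.mem_univ _
  rw [Finset.card_eq_sum_card_fiberwise hm]
  rw [Finset.mul_sum]
  have : ∀ v ∈ (univ : Finset (Fin n)),
      2 * ((Cherries G).filter (fun t => t.1 = v)).card ≤ Δ * (Δ - 1) :=
    fun v _ => center_card (Δ := Δ) G hdeg v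
  calc ∑ v ∈ (univ : Finset (Fin n)), 2 * ((Cherries G).filter (fun t => t.1 = v)).card
      ≤ ∑ v ∈ (univ : Finset (Fin n)), Δ * (Δ - 1) := Finset.sum_le_sum this
    _ = n * (Δ * (Δ - 1)) := by rw [Finset.sum_const, card_univ, Fintype.card_fin, smul_eq_mul]

end Counting

section CliqueBound

variable {k Δ : ℕ} (G : SimpleGraph (Fin n)) [DecidableRel G.Adj] (χ : Sym2 (Fin n) → C)

lemma numeric_key {A n' Δ' k' : ℕ}
    (hA : 2 * A ≤ 3 * (Δ' * (Δ' - 1)) * (n' * (n' - 1) * (k' - 1)))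
    (hk : 1 ≤ k') (hΔ : 1 ≤ Δ') (hn : 224 * Δ' ^ 2 * k' + 20 ≤ 10 * n') :
    448 ^ 6 * A ≤ 75 * 373 ^ 5 * (n' * (n' - 1) * (n' - 2)) := by
  have hp : 1 ≤ Δ' ^ 2 := Nat.one_le_pow _ _ hΔ
  have h224 : 224 * 1 * 1 ≤ 224 * Δ' ^ 2 * k' :=
    Nat.mul_le_mul (Nat.mul_le_mul_left 224 hp) hk
  have hn25 : 25 ≤ n' := by omega
  zify [hk, hΔ, show (1:ℕ) ≤ n' by omega, show (2:ℕ) ≤ n' by omega] at hA hn ⊢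
  have hD1 : (1:ℤ) ≤ (Δ' : ℤ) := by exact_mod_cast hΔ
  have hK1 : (1:ℤ) ≤ (k' : ℤ) := by exact_mod_cast hk
  have hN25 : (25:ℤ) ≤ (n' : ℤ) := by exact_mod_cast hn25
  set D := (Δ' : ℤ) with hD
  set K := (k' : ℤ) with hK
  set N := (n' : ℤ) with hN
  have hNN : (0:ℤ) ≤ N * (N - 1) := by nlinarith
  have hM : (0:ℤ) ≤ N * (N - 1) * (N - 2) := by nlinarith
  have e1 : D * (D - 1) * (N * (N - 1) * (K - 1)) ≤ (D ^ 2 * K) * (N * (N - 1)) := by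
    nlinarith [sq_nonneg D, mul_nonneg hNN (by nlinarith : (0:ℤ) ≤ D * K),
      mul_nonneg hNN (by nlinarith : (0:ℤ) ≤ D)]
  have c1 : 2 * (A : ℤ) ≤ 3 * (D ^ 2 * K) * (N * (N - 1)) := by nlinarith
  have e2 : 112 * (D ^ 2 * K) ≤ 5 * (N - 2) := by linarith
  have c2 : 224 * (A : ℤ) ≤ 15 * (N * (N - 1) * (N - 2)) := by nlinarith
  have key : (15 * 448 ^ 6 : ℤ) ≤ 16800 * 373 ^ 5 := by norm_num
  have c3 : 224 * (448 ^ 6 * (A : ℤ)) ≤ 224 * (75 * 373 ^ 5 * (N * (N - 1) * (N - 2))) := by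
    calc 224 * (448 ^ 6 * (A : ℤ)) = 448 ^ 6 * (224 * (A : ℤ)) := by ring
      _ ≤ 448 ^ 6 * (15 * (N * (N - 1) * (N - 2))) := by
          apply mul_le_mul_of_nonneg_left c2; positivity
      _ = (15 * 448 ^ 6) * (N * (N - 1) * (N - 2)) := by ring
      _ ≤ (16800 * 373 ^ 5) * (N * (N - 1) * (N - 2)) :=
          mul_le_mul_of_nonneg_right key hM
      _ = 224 * (75 * 373 ^ 5 * (N * (N - 1) * (N - 2))) := by ring
  linarith

variable (hdeg : ∀ v, G.degree v ≤ Δ)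
variable (hχk : ∀ (a : Fin n) (col : C),
    (univ.filter (fun u => u ≠ a ∧ χ s(a, u) = col)).card ≤ k)

include hdeg hχk in
lemma clique_card (s : Fin n ⊕ Fin n) :
    2 * (((univ : Finset (Tri n)).filter (fun B => Valid G χ B ∧ uses B s)).card) ≤
      3 * (Δ * (Δ - 1)) * (n * (n - 1) * (k - 1)) := by
  classical
  cases s with
  | inl v =>
    have hsub : ((univ : Finset (Tri n)).filter (fun B => Valid G χ B ∧ uses B (.inl v))) ⊆
        ((Cherries G).filter (fun t => t.1 = v ∨ t.2.1 = v ∨ t.2.2 = v)) ×ˢ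
          (BadVals (C := C) χ) := by
      intro B hB
      rw [Finset.mem_filter] at hB
      obtain ⟨-, hV, hu⟩ := hB
      obtain ⟨h1, h2, h3, h4, h5, h6, h7⟩ := hV
      rw [uses_iff] at hu
      rw [Finset.mem_product, Finset.mem_filter, memCh]
      refine ⟨⟨⟨h1, h2, h3⟩, ?_⟩, ?_⟩
      · rcases hu with h|h|h|h|h|h <;> simp only [Sum.inl.injEq, reduceCtorEq] at h <;> tauto
      · simp only [BadVals, Finset.mem_filter, Finset.mem_univ, true_and]
        exact ⟨h4, h5, h6, h7⟩
    have h1 := Finset.card_le_card hsub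
    rw [Finset.card_product] at h1
    have h2 := cherries_v_card (Δ := Δ) G hdeg v
    have h3 := badVals_card (k := k) χ hχk
    calc 2 * (((univ : Finset (Tri n)).filter (fun B => Valid G χ B ∧ uses B (.inl v))).card)
        ≤ 2 * (((Cherries G).filter (fun t => t.1 = v ∨ t.2.1 = v ∨ t.2.2 = v)).card *
          (BadVals (C := C) χ).card) := by omega
      _ = (2 * ((Cherries G).filter (fun t => t.1 = v ∨ t.2.1 = v ∨ t.2.2 = v)).card) *
          (BadVals (C := C) χ).card := by ring
      _ ≤ (3 * (Δ * (Δ - 1))) * (n * (n - 1) * (k - 1)) := Nat.mul_le_mul h2 h3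
  | inr α =>
    have hsub : ((univ : Finset (Tri n)).filter (fun B => Valid G χ B ∧ uses B (.inr α))) ⊆
        (Cherries G) ×ˢ
          ((BadVals (C := C) χ).filter (fun t => t.1 = α ∨ t.2.1 = α ∨ t.2.2 = α)) := by
      intro B hB
      rw [Finset.mem_filter] at hB
      obtain ⟨-, hV, hu⟩ := hB
      obtain ⟨h1, h2, h3, h4, h5, h6, h7⟩ := hV
      rw [uses_iff] at hu
      rw [Finset.mem_product, Finset.mem_filter, memCh]
      refine ⟨⟨h1, h2, h3⟩, ?_, ?_⟩
      · simp only [BadVals, Finset.mem_filter, Finset.mem_univ, true_and]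
        exact ⟨h4, h5, h6, h7⟩
      · rcases hu with h|h|h|h|h|h <;> simp only [Sum.inr.injEq, reduceCtorEq] at h <;> tauto
    have h1 := Finset.card_le_card hsub
    rw [Finset.card_product] at h1
    have h2 := cherries_all_card (Δ := Δ) G hdeg
    have h3 := badValsFix_card (k := k) χ hχk α
    calc 2 * (((univ : Finset (Tri n)).filter (fun B => Valid G χ B ∧ uses B (.inr α))).card)
        ≤ 2 * ((Cherries G).card *
          ((BadVals (C := C) χ).filter (fun t => t.1 = α ∨ t.2.1 = α ∨ t.2.2 = α)).card) := by
            omega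
      _ = (2 * (Cherries G).card) *
          ((BadVals (C := C) χ).filter (fun t => t.1 = α ∨ t.2.1 = α ∨ t.2.2 = α)).card := by
            ring
      _ ≤ (n * (Δ * (Δ - 1))) * (3 * ((n - 1) * (k - 1))) := Nat.mul_le_mul h2 h3
      _ = 3 * (Δ * (Δ - 1)) * (n * (n - 1) * (k - 1)) := by ring
  
include hdeg hχk in
lemma clique_num (hk : 1 ≤ k) (hΔ : 1 ≤ Δ) (hn : 224 * Δ ^ 2 * k + 20 ≤ 10 * n)
    (s : Fin n ⊕ Fin n) :
    448 ^ 6 * (((univ : Finset (Tri n)).filter (fun B => Valid G χ B ∧ uses B s)).card) ≤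
      75 * 373 ^ 5 * (n * (n - 1) * (n - 2)) :=
  numeric_key (clique_card (k := k) (Δ := Δ) G χ hdeg hχk s) hk hΔ hn

end CliqueBound

section Main

variable {k Δ : ℕ} (G : SimpleGraph (Fin n)) [DecidableRel G.Adj] (χ : Sym2 (Fin n) → C)

def shares (τ B : Tri n) : Prop := ∃ s, uses τ s ∧ uses B s

noncomputable def lastIdx (τ B : Tri n) : Fin 6 :=
  if h : ((univ : Finset (Fin 6)).filter (fun i => uses B (slots τ i))).Nonempty then
    ((univ : Finset (Fin 6)).filter (fun i => uses B (slots τ i))).max' h else 0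

lemma lastIdx_ge {τ B : Tri n} {i : Fin 6} (h : uses B (slots τ i)) : i ≤ lastIdx τ B := by
  have hne : ((univ : Finset (Fin 6)).filter (fun i => uses B (slots τ i))).Nonempty :=
    ⟨i, Finset.mem_filter.2 ⟨Finset.mem_univ _, h⟩⟩
  rw [lastIdx, dif_pos hne]
  exact Finset.le_max' _ i (Finset.mem_filter.2 ⟨Finset.mem_univ _, h⟩)

lemma lastIdx_uses {τ B : Tri n} (h : shares τ B) : uses B (slots τ (lastIdx τ B)) := by
  obtain ⟨s, ⟨i, hi⟩, hB⟩ := h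
  have hne : ((univ : Finset (Fin 6)).filter (fun i => uses B (slots τ i))).Nonempty :=
    ⟨i, Finset.mem_filter.2 ⟨Finset.mem_univ _, hi ▸ hB⟩⟩
  rw [lastIdx, dif_pos hne]
  exact (Finset.mem_filter.1 (Finset.max'_mem _ hne)).2

lemma desc3 : n.descFactorial 3 = n * (n - 1) * (n - 2) := by
  simp [Nat.descFactorial]
  ring

variable (hdeg : ∀ v, G.degree v ≤ Δ)
variable (hχk : ∀ (a : Fin n) (col : C),
    (univ.filter (fun u => u ≠ a ∧ χ s(a, u) = col)).card ≤ k)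
variable (hk1 : 1 ≤ k) (hΔ1 : 1 ≤ Δ) (hn10 : 224 * Δ ^ 2 * k + 20 ≤ 10 * n)

include hdeg hχk hk1 hΔ1 hn10 in
theorem main_ind (T : Finset (Tri n)) :
    (∀ B ∈ T, Valid G χ B) → ∀ τ : Tri n, Valid G χ τ → ∀ J : Finset (Fin 6),
    (∀ i ∈ J, ∀ B ∈ T, ¬ uses B (slots τ i)) →
    373 ^ (6 - J.card) * (n.descFactorial 3) * ((Av T).filter (fun σ => Occ τ σ)).card ≤
      448 ^ (6 - J.card) * (Av T).card := by
  induction T using Finset.strongInduction with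
  | _ T IH =>
  intro hTval τ hτ J hJ
  classical
  have hp2 : 1 ≤ Δ ^ 2 := Nat.one_le_pow _ _ hΔ1
  have h224 : 224 * 1 * 1 ≤ 224 * Δ ^ 2 * k := Nat.mul_le_mul (Nat.mul_le_mul_left _ hp2) hk1
  have hn3 : 3 ≤ n := by omega
  have hcpos : 0 < n.descFactorial 3 := by
    rw [desc3]
    exact Nat.mul_pos (Nat.mul_pos (by omega) (by omega)) (by omega)
  set c := n.descFactorial 3 with hc
  set S₁ := T.filter (fun B => shares τ B) with hS₁
  set S₂ := T.filter (fun B => ¬ shares τ B) with hS₂def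
  set U : ℕ → Finset (Tri n) := fun m => S₂ ∪ S₁.filter (fun B => (lastIdx τ B : ℕ) < m)
    with hU
  have hU0 : U 0 = S₂ := by
    simp only [hU]
    rw [Finset.filter_false_of_mem (fun B _ => by omega), Finset.union_empty]
  have hU6 : U 6 = T := by
    ext B
    simp only [hU, Finset.mem_union, Finset.mem_filter, hS₁, hS₂def, Finset.mem_filter]
    constructor
    · rintro (⟨hB, -⟩ | ⟨⟨hB, -⟩, -⟩) <;> exact hB
    · intro hB
      by_cases hs : shares τ B
      · exact Or.inr ⟨⟨hB, hs⟩, (lastIdx τ B).isLt⟩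
      · exact Or.inl ⟨hB, hs⟩
  have hUsub : ∀ m, U m ⊆ T := by
    intro m B hB
    rcases Finset.mem_union.1 hB with h | h
    · exact (Finset.mem_filter.1 h).1
    · exact (Finset.mem_filter.1 (Finset.mem_filter.1 h).1).1
  have hUmono : ∀ m, U m ⊆ U (m + 1) := by
    intro m
    apply Finset.union_subset_union_right
    intro B hB
    rw [Finset.mem_filter] at *
    exact ⟨hB.1, by omega⟩
  set g : ℕ → ℕ := fun m => (Av (U m)).card with hg
  -- the key step
  have step : ∀ m, m < 6 → 373 * g m ≤ 448 * g (m + 1) := by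
    intro m hm
    set s := slots τ ⟨m, hm⟩ with hs
    set Pm := S₁.filter (fun B => (lastIdx τ B : ℕ) = m) with hPm
    have hdiff : Av (U m) \ Av (U (m + 1)) ⊆
        Pm.biUnion (fun B => (Av (U m)).filter (fun σ => Occ B σ)) := by
      intro σ hσ
      rw [Finset.mem_sdiff] at hσ
      obtain ⟨hσm, hσm1⟩ := hσ
      obtain ⟨B, hBU, hOccB⟩ : ∃ B ∈ U (m + 1), Occ B σ := by
        by_contra hno
        push_neg at hno
        exact hσm1 (mem_Av.2 hno)
      have hBm : B ∉ U m := fun hh => (mem_Av.1 hσm B hh) hOccB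
      have hBS1 : B ∈ S₁ ∧ (lastIdx τ B : ℕ) = m := by
        rcases Finset.mem_union.1 hBU with h | h
        · exact absurd (Finset.mem_union_left _ h) hBm
        · rw [Finset.mem_filter] at h
          have h3 : ¬ ((lastIdx τ B : ℕ) < m) := fun hlt =>
            hBm (Finset.mem_union_right _ (Finset.mem_filter.2 ⟨h.1, hlt⟩))
          exact ⟨h.1, by omega⟩
      rw [Finset.mem_biUnion]
      exact ⟨B, Finset.mem_filter.2 ⟨hBS1.1, hBS1.2⟩, Finset.mem_filter.2 ⟨hσm, hOccB⟩⟩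
    have hper : ∀ B ∈ Pm,
        373 ^ 5 * c * ((Av (U m)).filter (fun σ => Occ B σ)).card ≤ 448 ^ 5 * g m := by
      intro B hBP
      rw [Finset.mem_filter] at hBP
      obtain ⟨hBS1, hBli⟩ := hBP
      have hBS1' := Finset.mem_filter.1 hBS1
      obtain ⟨hBT, hBsh⟩ := hBS1'
      have hBuse : uses B s := by
        have h1 := lastIdx_uses hBsh
        have h2 : lastIdx τ B = ⟨m, hm⟩ := Fin.ext hBli
        rwa [h2] at h1
      obtain ⟨iB, hiB⟩ := hBuse
      have hBnotU : B ∉ U m := by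
        intro hh
        rcases Finset.mem_union.1 hh with h | h
        · exact (Finset.mem_filter.1 h).2 hBsh
        · have := (Finset.mem_filter.1 h).2; omega
      have hss : U m ⊂ T := by
        rw [Finset.ssubset_iff_of_subset (hUsub m)]
        exact ⟨B, hBT, hBnotU⟩
      have hmiss : ∀ i ∈ ({iB} : Finset (Fin 6)), ∀ B' ∈ U m, ¬ uses B' (slots B i) := by
        intro i hi B' hB' hux
        rw [Finset.mem_singleton] at hi
        subst hi
        rw [hiB] at hux
        rcases Finset.mem_union.1 hB' with h | h
        · exact (Finset.mem_filter.1 h).2 ⟨s, ⟨⟨m, hm⟩, rfl⟩, hux⟩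
        · have hlt := (Finset.mem_filter.1 h).2
          have := lastIdx_ge (i := ⟨m, hm⟩) hux
          have : m ≤ (lastIdx τ B' : ℕ) := this
          omega
      have hIH := IH (U m) hss (fun B' hB' => hTval B' (hUsub m hB')) B (hTval B hBT)
        {iB} hmiss
      rw [Finset.card_singleton] at hIH
      norm_num at hIH
      exact hIH
    have hsum : 373 ^ 5 * c * (∑ B ∈ Pm, ((Av (U m)).filter (fun σ => Occ B σ)).card) ≤
        Pm.card * (448 ^ 5 * g m) := by
      rw [Finset.mul_sum]
      calc ∑ B ∈ Pm, 373 ^ 5 * c * ((Av (U m)).filter (fun σ => Occ B σ)).card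
          ≤ ∑ B ∈ Pm, 448 ^ 5 * g m := Finset.sum_le_sum hper
        _ = Pm.card * (448 ^ 5 * g m) := by rw [Finset.sum_const, smul_eq_mul]
    have hPsub : Pm ⊆ (univ : Finset (Tri n)).filter (fun B => Valid G χ B ∧ uses B s) := by
      intro B hB
      rw [hPm, Finset.mem_filter] at hB
      obtain ⟨hBS1, hBli⟩ := hB
      have hBS1' := Finset.mem_filter.1 hBS1
      rw [Finset.mem_filter]
      refine ⟨Finset.mem_univ _, hTval B hBS1'.1, ?_⟩
      have h1 := lastIdx_uses hBS1'.2
      have h2 : lastIdx τ B = ⟨m, hm⟩ := Fin.ext hBli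
      rwa [h2] at h1
    have hNum := clique_num (k := k) (Δ := Δ) G χ hdeg hχk hk1 hΔ1 hn10 s
    have hPcard : 448 ^ 6 * Pm.card ≤ 75 * 373 ^ 5 * c := by
      calc 448 ^ 6 * Pm.card ≤ 448 ^ 6 *
          (((univ : Finset (Tri n)).filter (fun B => Valid G χ B ∧ uses B s)).card) :=
            Nat.mul_le_mul_left _ (Finset.card_le_card hPsub)
        _ ≤ 75 * 373 ^ 5 * (n * (n - 1) * (n - 2)) := hNum
        _ = 75 * 373 ^ 5 * c := by rw [hc, desc3]
    have hcards : g m ≤ g (m + 1) +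
        ∑ B ∈ Pm, ((Av (U m)).filter (fun σ => Occ B σ)).card := by
      have hAvmono : Av (U (m + 1)) ⊆ Av (U m) := Av_anti (hUmono m)
      have := Finset.card_sdiff_add_card_eq_card hAvmono
      have hd := le_trans (Finset.card_le_card hdiff) (Finset.card_biUnion_le)
      simp only [hg]
      omega
    -- final arithmetic
    have hS448 : 373 ^ 5 * c * (448 * (∑ B ∈ Pm, ((Av (U m)).filter (fun σ => Occ B σ)).card))
        ≤ 373 ^ 5 * c * (75 * g m) := by
      calc 373 ^ 5 * c * (448 * (∑ B ∈ Pm, ((Av (U m)).filter (fun σ => Occ B σ)).card))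
          = 448 * (373 ^ 5 * c * (∑ B ∈ Pm, ((Av (U m)).filter (fun σ => Occ B σ)).card)) := by
            ring
        _ ≤ 448 * (Pm.card * (448 ^ 5 * g m)) := Nat.mul_le_mul_left _ hsum
        _ = (448 ^ 6 * Pm.card) * g m := by ring
        _ ≤ (75 * 373 ^ 5 * c) * g m := Nat.mul_le_mul_right _ hPcard
        _ = 373 ^ 5 * c * (75 * g m) := by ring
    have hpos : 0 < 373 ^ 5 * c := by positivity
    have hS75 : 448 * (∑ B ∈ Pm, ((Av (U m)).filter (fun σ => Occ B σ)).card) ≤ 75 * g m :=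
      Nat.le_of_mul_le_mul_left (by
        calc (373 ^ 5 * c) * (448 * (∑ B ∈ Pm, ((Av (U m)).filter (fun σ => Occ B σ)).card))
            ≤ 373 ^ 5 * c * (75 * g m) := hS448) hpos
    omega
  -- skip steps
  have skip : ∀ m (hm : m < 6), (⟨m, hm⟩ : Fin 6) ∈ J → g (m + 1) = g m := by
    intro m hm hmem
    have hUeq : U (m + 1) = U m := by
      simp only [hU]
      congr 1
      ext B
      simp only [Finset.mem_filter]
      constructor
      · rintro ⟨hB, hlt⟩
        refine ⟨hB, ?_⟩
        rcases Nat.lt_succ_iff_lt_or_eq.1 hlt with h | h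
        · exact h
        · exfalso
          have hBsh := (Finset.mem_filter.1 hB).2
          have h1 := lastIdx_uses hBsh
          have h2 : lastIdx τ B = ⟨m, hm⟩ := Fin.ext h
          rw [h2] at h1
          exact hJ _ hmem B (Finset.mem_filter.1 hB).1 h1
      · rintro ⟨hB, hlt⟩
        exact ⟨hB, by omega⟩
    simp only [hg]
    rw [hUeq]
  -- telescoping
  set cnt : ℕ → ℕ := fun m =>
    ((Finset.univ : Finset (Fin 6)).filter (fun (i : Fin 6) => (i : ℕ) < m ∧ i ∉ J)).card with hcnt
  have fold : ∀ m, m ≤ 6 → 373 ^ (cnt m) * g 0 ≤ 448 ^ (cnt m) * g m := by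
    intro m
    induction m with
    | zero =>
      intro _
      have : cnt 0 = 0 := by
        simp only [hcnt]
        rw [Finset.card_eq_zero]
        ext i; simp
      rw [this]
      simp
    | succ m ih =>
      intro hm6
      have hm : m < 6 := by omega
      have ihm := ih (by omega)
      by_cases hskip : (⟨m, hm⟩ : Fin 6) ∈ J
      · have hcnteq : cnt (m + 1) = cnt m := by
          simp only [hcnt]
          congr 1
          ext i
          simp only [Finset.mem_filter, Finset.mem_univ, true_and]
          constructor
          · rintro ⟨hlt, hnJ⟩
            refine ⟨?_, hnJ⟩
            rcases Nat.lt_succ_iff_lt_or_eq.1 hlt with h | h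
            · exact h
            · exfalso
              have : i = ⟨m, hm⟩ := Fin.ext h
              rw [this] at hnJ
              exact hnJ hskip
          · rintro ⟨hlt, hnJ⟩
            exact ⟨by omega, hnJ⟩
        rw [hcnteq, skip m hm hskip]
        exact ihm
      · have hcnteq : cnt (m + 1) = cnt m + 1 := by
          simp only [hcnt]
          have : (Finset.univ : Finset (Fin 6)).filter (fun (i : Fin 6) => (i : ℕ) < m + 1 ∧ i ∉ J) =
              insert (⟨m, hm⟩ : Fin 6)
                ((Finset.univ : Finset (Fin 6)).filter (fun (i : Fin 6) => (i : ℕ) < m ∧ i ∉ J)) := by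
            ext i
            simp only [Finset.mem_filter, Finset.mem_univ, true_and, Finset.mem_insert]
            constructor
            · rintro ⟨hlt, hnJ⟩
              rcases Nat.lt_succ_iff_lt_or_eq.1 hlt with h | h
              · exact Or.inr ⟨h, hnJ⟩
              · exact Or.inl (Fin.ext h)
            · rintro (rfl | ⟨hlt, hnJ⟩)
              · exact ⟨Nat.lt_succ_self m, hskip⟩
              · exact ⟨by omega, hnJ⟩
          rw [this, Finset.card_insert_of_notMem (by
            simp only [Finset.mem_filter, Finset.mem_univ, true_and]
            rintro ⟨hlt, -⟩
            exact absurd hlt (lt_irrefl m))]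
        rw [hcnteq, pow_succ, pow_succ]
        calc 373 ^ (cnt m) * 373 * g 0 = 373 * (373 ^ (cnt m) * g 0) := by ring
          _ ≤ 373 * (448 ^ (cnt m) * g m) := Nat.mul_le_mul_left _ ihm
          _ = 448 ^ (cnt m) * (373 * g m) := by ring
          _ ≤ 448 ^ (cnt m) * (448 * g (m + 1)) := Nat.mul_le_mul_left _ (step m hm)
          _ = 448 ^ (cnt m) * 448 * g (m + 1) := by ring
  have hcnt6 : cnt 6 = 6 - J.card := by
    simp only [hcnt]
    have : ((Finset.univ : Finset (Fin 6)).filter (fun (i : Fin 6) => (i : ℕ) < 6 ∧ i ∉ J)) = Jᶜ := by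
      ext i
      simp [i.isLt]
    rw [this, Finset.card_compl, Fintype.card_fin]
  -- switching on S₂
  have hxy : τ.1.1 ≠ τ.1.2.1 := hτ.1.ne
  have hxz : τ.1.1 ≠ τ.1.2.2 := hτ.2.1.ne
  have hyz : τ.1.2.1 ≠ τ.1.2.2 := ne_of_lt hτ.2.2.1
  have hS₂prop : ∀ B ∈ S₂, ∀ s', uses τ s' → ¬ uses B s' := by
    intro B hB s' hus hub
    exact (Finset.mem_filter.1 hB).2 ⟨s', hus, hub⟩
  have hswitch := switching τ hxy hxz hyz S₂ hS₂prop
  have hmono : ((Av T).filter (fun σ => Occ τ σ)).card ≤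
      ((Av S₂).filter (fun σ => Occ τ σ)).card :=
    Finset.card_le_card (Finset.filter_subset_filter _ (Av_anti (Finset.filter_subset _ _)))
  have hg0 : g 0 = (Av S₂).card := by rw [hg]; simp only [hU0]
  have hg6 : g 6 = (Av T).card := by rw [hg]; simp only [hU6]
  calc 373 ^ (6 - J.card) * c * ((Av T).filter (fun σ => Occ τ σ)).card
      ≤ 373 ^ (6 - J.card) * c * ((Av S₂).filter (fun σ => Occ τ σ)).card := by
        exact Nat.mul_le_mul_left _ hmono
    _ = 373 ^ (6 - J.card) * (c * ((Av S₂).filter (fun σ => Occ τ σ)).card) := by ring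
    _ ≤ 373 ^ (6 - J.card) * (Av S₂).card := Nat.mul_le_mul_left _ hswitch
    _ = 373 ^ (cnt 6) * g 0 := by rw [hcnt6, hg0]
    _ ≤ 448 ^ (cnt 6) * g 6 := fold 6 (le_refl _)
    _ = 448 ^ (6 - J.card) * (Av T).card := by rw [hcnt6, hg6]

end Main

section Final

variable {k Δ : ℕ} (G : SimpleGraph (Fin n)) [DecidableRel G.Adj] (χ : Sym2 (Fin n) → C)
variable (hdeg : ∀ v, G.degree v ≤ Δ)
variable (hχk : ∀ (a : Fin n) (col : C),
    (univ.filter (fun u => u ≠ a ∧ χ s(a, u) = col)).card ≤ k)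
variable (hk1 : 1 ≤ k) (hΔ1 : 1 ≤ Δ) (hn10 : 224 * Δ ^ 2 * k + 20 ≤ 10 * n)

include hdeg hχk hk1 hΔ1 hn10 in
theorem av_pos (T : Finset (Tri n)) (hT : ∀ B ∈ T, Valid G χ B) : 0 < (Av T).card := by
  classical
  induction T using Finset.strongInduction with
  | _ T IH =>
  rcases T.eq_empty_or_nonempty with rfl | ⟨τ, hτ⟩
  · refine Finset.card_pos.2 ⟨1, mem_Av.2 ?_⟩
    intro τ hτ
    exact absurd hτ (Finset.notMem_empty τ)
  · set T' := T.erase τ with hT'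
    have hT'sub : T' ⊂ T := Finset.erase_ssubset hτ
    have hT'val : ∀ B ∈ T', Valid G χ B := fun B hB => hT B (Finset.mem_of_mem_erase hB)
    have hpos := IH T' hT'sub hT'val
    have hmain := main_ind G χ hdeg hχk hk1 hΔ1 hn10 T' hT'val τ (hT τ hτ) ∅ (by simp)
    simp only [Finset.card_empty, Nat.sub_zero] at hmain
    -- bounds
    have hp2 : 1 ≤ Δ ^ 2 := Nat.one_le_pow _ _ hΔ1
    have h224 : 224 * 1 * 1 ≤ 224 * Δ ^ 2 * k := Nat.mul_le_mul (Nat.mul_le_mul_left _ hp2) hk1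
    have hn25 : 25 ≤ n := by omega
    have hc138 : 13800 ≤ n.descFactorial 3 := by
      rw [desc3]
      calc (13800 : ℕ) = 25 * 24 * 23 := by norm_num
        _ ≤ n * (n - 1) * (n - 2) :=
          Nat.mul_le_mul (Nat.mul_le_mul (by omega) (by omega)) (by omega)
    have hcoeff : 448 ^ 6 < 373 ^ 6 * n.descFactorial 3 := by
      calc (448:ℕ) ^ 6 < 373 ^ 6 * 13800 := by norm_num
        _ ≤ 373 ^ 6 * n.descFactorial 3 := Nat.mul_le_mul_left _ hc138
    set X := ((Av T').filter (fun σ => Occ τ σ)).card with hX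
    set Y := (Av T').card with hY
    have hXY : X < Y := by
      by_contra hcon
      push_neg at hcon
      have h1 : 373 ^ 6 * n.descFactorial 3 * Y ≤ 373 ^ 6 * n.descFactorial 3 * X :=
        Nat.mul_le_mul_left _ hcon
      have h2 : 373 ^ 6 * n.descFactorial 3 * X ≤ 448 ^ 6 * Y := hmain
      have h3 : 448 ^ 6 * Y < (373 ^ 6 * n.descFactorial 3) * Y :=
        Nat.mul_lt_mul_of_lt_of_le hcoeff (le_refl Y) (by omega)
      omega
    have hsd : 0 < (Av T' \ (Av T').filter (fun σ => Occ τ σ)).card := by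
      rw [Finset.card_sdiff_of_subset (Finset.filter_subset _ _)]
      omega
    obtain ⟨σ, hσ⟩ := Finset.card_pos.1 hsd
    rw [Finset.mem_sdiff] at hσ
    obtain ⟨hσAv, hσnotF⟩ := hσ
    have hnOcc : ¬ Occ τ σ := fun h => hσnotF (Finset.mem_filter.2 ⟨hσAv, h⟩)
    refine Finset.card_pos.2 ⟨σ, mem_Av.2 ?_⟩
    intro B hB
    rcases eq_or_ne B τ with rfl | hne
    · exact hnOcc
    · exact mem_Av.1 hσAv B (Finset.mem_erase.2 ⟨hne, hB⟩)

end Final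

end BKP


/-- **Corollary 4** (Böttcher–Kohayakawa–Procacci).
If `G` has `n` vertices and maximum degree `Δ > 0`, and `k` is a positive integer with
`k ≤ (n−2)/(22.4·Δ²)`, then every locally `k`-bounded edge colouring of `K_n` contains a
properly coloured copy of `G`. -/
theorem properly_coloured_copy_of_bounded_degree_graph
    {n Δ : ℕ} {C : Type*} (G : SimpleGraph (Fin n)) [DecidableRel G.Adj]
    (hΔ : G.maxDegree = Δ) (hΔpos : 0 < Δ)
    (k : ℕ) (hk : 0 < k)
    (hkle : (k : ℝ) ≤ ((n : ℝ) - 2) / (22.4 * (Δ : ℝ)^2))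
    (χ : Sym2 (Fin n) → C)
    (hχ : ∀ (v : Fin n) (c : C), {u : Fin n | u ≠ v ∧ χ s(v, u) = c}.ncard ≤ k) :
    ∃ σ : Fin n ↪ Fin n, ∀ x y z : Fin n, G.Adj x y → G.Adj x z → y ≠ z →
      χ s(σ x, σ y) ≠ χ s(σ x, σ z) := by
  classical
  have hdeg : ∀ v, G.degree v ≤ Δ := fun v => hΔ ▸ G.degree_le_maxDegree v
  have hχk : ∀ (a : Fin n) (col : C),
      (Finset.univ.filter (fun u => u ≠ a ∧ χ s(a, u) = col)).card ≤ k := by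
    intro a col
    have h := hχ a col
    have hset : {u : Fin n | u ≠ a ∧ χ s(a, u) = col} =
        ↑(Finset.univ.filter (fun u => u ≠ a ∧ χ s(a, u) = col)) := by
      ext u; simp
    rw [hset, Set.ncard_coe_finset] at h
    exact h
  have hn10 : 224 * Δ ^ 2 * k + 20 ≤ 10 * n := by
    have hΔpos' : (0:ℝ) < 22.4 * (Δ:ℝ)^2 := by
      have : (0:ℝ) < (Δ:ℝ) := by exact_mod_cast hΔpos
      positivity
    have h1 : (k : ℝ) * (22.4 * (Δ:ℝ)^2) ≤ (n:ℝ) - 2 := by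
      rw [le_div_iff₀ hΔpos'] at hkle
      exact hkle
    have h2 : ((224 * Δ ^ 2 * k + 20 : ℕ) : ℝ) ≤ ((10 * n : ℕ) : ℝ) := by
      push_cast
      nlinarith [h1]
    exact_mod_cast h2
  have hpos := BKP.av_pos G χ hdeg hχk hk hΔpos hn10
    (Finset.univ.filter (fun B => BKP.Valid G χ B))
    (fun B hB => (Finset.mem_filter.1 hB).2)
  obtain ⟨σ, hσ⟩ := Finset.card_pos.1 hpos
  refine ⟨σ.toEmbedding, ?_⟩
  intro x y z hxy hxz hyz heq
  simp only [Equiv.coe_toEmbedding] at heq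
  rcases lt_or_gt_of_ne hyz with hlt | hlt
  · have hvalid : BKP.Valid G χ ((x, y, z), (σ x, σ y, σ z)) :=
      ⟨hxy, hxz, hlt, σ.injective.ne hxy.ne, σ.injective.ne hxz.ne, σ.injective.ne hyz, heq⟩
    exact BKP.mem_Av.1 hσ _ (Finset.mem_filter.2 ⟨Finset.mem_univ _, hvalid⟩) ⟨rfl, rfl, rfl⟩
  · have hvalid : BKP.Valid G χ ((x, z, y), (σ x, σ z, σ y)) :=
      ⟨hxz, hxy, hlt, σ.injective.ne hxz.ne, σ.injective.ne hxy.ne,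
        σ.injective.ne (Ne.symm hyz), heq.symm⟩
    exact BKP.mem_Av.1 hσ _ (Finset.mem_filter.2 ⟨Finset.mem_univ _, hvalid⟩) ⟨rfl, rfl, rfl⟩
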